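/- Let S be a t-conorm, T a t-norm, and X a set with at least two elements. Every fuzzy binary relation on X is strongly decomposable with respect to (T, S) if and only if S is continuous in its first coordinate and for all w ∈ [0,1], D¹_S(w) ∩ D⁰_T(w) ≠ ∅, where D¹_S(w) = {t ∈ [0,1] : S(t,w) = 1} and D⁰_T(w) = {t ∈ [0,1] : T(t,w) = 0}. -/
import Mathlib



structure Tconorm where
  S : unitInterval → unitInterval → unitInterval
  comm : ∀ a b, S a b = S b a
  assoc : ∀ a b c, S a (S b c) = S (S a b) c
  mono : ∀ a b c d, a ≤ c → b ≤ d → S a b ≤ S c d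
  S_zero : ∀ a, S a 0 = a
  S_one : ∀ a, S a 1 = 1

structure Tnorm where
  T : unitInterval → unitInterval → unitInterval
  comm : ∀ a b, T a b = T b a
  assoc : ∀ a b c, T a (T b c) = T (T a b) c
  mono : ∀ a b c d, a ≤ c → b ≤ d → T a b ≤ T c d
  T_one : ∀ a, T a 1 = a
  T_zero : ∀ a, T a 0 = 0

/-- A fuzzy binary relation `P` is asymmetric. -/
def FAsymm {X : Type*} (P : X → X → unitInterval) : Prop :=
  ∀ x y, 0 < P x y → P y x = 0

/-- A fuzzy binary relation `I` is symmetric. -/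
def FSymm {X : Type*} (I : X → X → unitInterval) : Prop :=
  ∀ x y, I x y = I y x

/-- `(P, I)` is a weak decomposition of `R` with respect to the t-conorm `S`. -/
def IsWeakDecomp {X : Type*} (S : Tconorm) (R P I : X → X → unitInterval) : Prop :=
  FAsymm P ∧ FSymm I ∧ (∀ x y, R x y = S.S (P x y) (I x y)) ∧
    ∀ x y, I x y = 1 → P x y = 0

/-- `(P, I)` is a strong decomposition of `R` with respect to `(T, S)`. -/
def IsStrongDecomp {X : Type*} (T : Tnorm) (S : Tconorm)
    (R P I : X → X → unitInterval) : Prop :=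
  FAsymm P ∧ FSymm I ∧ (∀ x y, R x y = S.S (P x y) (I x y)) ∧
    ∀ x y, T.T (P x y) (I x y) = 0

/-- The triplet `(R, P, I)` is a fuzzy preference (FP1–FP6). -/
def IsFuzzyPref {X : Type*} (R P I : X → X → unitInterval) : Prop :=
  (∀ x y, 0 < P x y → P y x = 0) ∧
  (∀ x y, I x y = I y x) ∧
  (∀ x y, P x y ≤ R x y) ∧
  (∀ x y, R y x < R x y ↔ 0 < P x y) ∧
  (∀ x y, P x y = 0 → R x y = I x y) ∧
  (∀ x y z w, I x y ≤ I z w → P x y ≤ P z w → R x y ≤ R z w)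

/-- The 1-interval of `w` for the t-conorm `S`. -/
def D1 (S : Tconorm) (w : unitInterval) : Set unitInterval := {t | S.S t w = 1}

/-- The 0-interval of `w` for the t-norm `T`. -/
def D0 (T : Tnorm) (w : unitInterval) : Set unitInterval := {t | T.T t w = 0}


section Aux

open Set

lemma S_zero' (S : Tconorm) (a : unitInterval) : S.S 0 a = a := by
  rw [S.comm]; exact S.S_zero a

lemma T_zero' (T : Tnorm) (a : unitInterval) : T.T 0 a = 0 := by
  rw [T.comm]; exact T.T_zero a

/-- Extraction lemma for the forward direction. -/
lemma exists_t_of_decomp {X : Type*} (hX : ∃ x y : X, x ≠ y) (S : Tconorm) (T : Tnorm)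
    (H : ∀ R : X → X → unitInterval, ∃ P I : X → X → unitInterval, IsStrongDecomp T S R P I)
    (r w : unitInterval) (hwr : w ≤ r) :
    ∃ t, S.S t w = r ∧ T.T t w = 0 := by
  classical
  obtain ⟨x, y, hxy⟩ := hX
  set R : X → X → unitInterval := fun a b =>
    if a = x ∧ b = y then r else if a = y ∧ b = x then w else 0 with hRdef
  obtain ⟨P, I, hasym, hsym, hR, hT⟩ := H R
  have hRxy : R x y = r := by simp [hRdef]
  have hRyx : R y x = w := by simp [hRdef, hxy, hxy.symm]
  by_cases hP : P x y = 0
  · have hI : I x y = r := by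
      have h := hR x y
      rw [hP, S_zero', hRxy] at h
      exact h.symm
    have hge : r ≤ w := by
      have h := hR y x
      rw [hRyx, hsym y x, hI] at h
      calc r = S.S 0 r := (S_zero' S r).symm
        _ ≤ S.S (P y x) r := S.mono _ _ _ _ unitInterval.nonneg' le_rfl
        _ = w := h.symm
    have hwr' : w = r := le_antisymm hwr hge
    exact ⟨0, by rw [S_zero', hwr'], by rw [T_zero']⟩
  · have hPpos : 0 < P x y := lt_of_le_of_ne unitInterval.nonneg' (Ne.symm hP)
    have hPyx := hasym x y hPpos
    have hIw : I x y = w := by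
      have h := hR y x
      rw [hPyx, S_zero', hsym y x, hRyx] at h
      exact h.symm
    refine ⟨P x y, ?_, ?_⟩
    · rw [← hIw, ← hR x y, hRxy]
    · rw [← hIw]; exact hT x y

/-- Key construction lemma for the backward direction. -/
lemma exists_p_of_cont (S : Tconorm) (T : Tnorm)
    (hcont : ∀ b, Continuous fun a => S.S a b)
    (hD : ∀ w, (D1 S w ∩ D0 T w).Nonempty)
    (r w : unitInterval) (hwr : w ≤ r) :
    ∃ p, S.S p w = r ∧ T.T p w = 0 := by
  haveI : Fact ((0:ℝ) ≤ 1) := ⟨zero_le_one⟩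
  obtain ⟨t, ht1, ht0⟩ := hD w
  have ht1 : S.S t w = 1 := ht1
  have ht0 : T.T t w = 0 := ht0
  have h0t : (0 : unitInterval) ≤ t := unitInterval.nonneg'
  have hiv := intermediate_value_Icc h0t ((hcont w).continuousOn)
  have hr : r ∈ Icc (S.S 0 w) (S.S t w) := by
    rw [S_zero', ht1]
    exact ⟨hwr, unitInterval.le_one'⟩
  obtain ⟨p, hp, hpr⟩ := hiv hr
  refine ⟨p, hpr, le_antisymm ?_ unitInterval.nonneg'⟩
  calc T.T p w ≤ T.T t w := T.mono _ _ _ _ hp.2 le_rfl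
    _ = 0 := ht0

end Aux

/-- Every fuzzy binary relation on a set with at least two elements is strongly
decomposable with respect to `(T, S)` iff `S` is continuous in the first coordinate
and `D¹_S(w) ∩ D⁰_T(w) ≠ ∅` for all `w`. -/
theorem strong_decomposable_iff {X : Type*} (hX : ∃ x y : X, x ≠ y)
    (S : Tconorm) (T : Tnorm) :
    (∀ R : X → X → unitInterval, ∃ P I : X → X → unitInterval, IsStrongDecomp T S R P I) ↔
    ((∀ b, Continuous fun a => S.S a b) ∧ ∀ w, (D1 S w ∩ D0 T w).Nonempty) := by
  classical
  constructor
  · intro H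
    have key := exists_t_of_decomp hX S T H
    constructor
    · intro b
      set f : unitInterval → unitInterval := fun a => S.S a b with hf
      have hmono : Monotone f := fun a a' h => S.mono _ _ _ _ h le_rfl
      have hlb : ∀ a, b ≤ f a := fun a => by
        calc b = S.S 0 b := (S_zero' S b).symm
          _ ≤ f a := S.mono _ _ _ _ unitInterval.nonneg' le_rfl
      have hsurj : ∀ m, b ≤ m → ∃ p, f p = m := fun m hm =>
        (key m b hm).imp fun p h => h.1
      rw [continuous_iff_continuousAt]
      intro a
      apply continuousAt_iff_continuous_left_right.2
      constructor
      · by_cases hba : f a = b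
        · have hconst : ∀ x ∈ Set.Iic a, f x = f a := fun x hx =>
            le_antisymm (hmono (Set.mem_Iic.mp hx)) (by rw [hba]; exact hlb x)
          exact ContinuousWithinAt.congr continuousWithinAt_const hconst rfl
        · apply continuousWithinAt_left_of_monotoneOn_of_exists_between
            (hmono.monotoneOn _) Filter.univ_mem
          intro c hc
          have hbf : b < f a := lt_of_le_of_ne (hlb a) fun h => hba h.symm
          obtain ⟨m, hm1, hm2⟩ := exists_between (max_lt hc hbf)
          obtain ⟨p, hp⟩ := hsurj m (le_of_lt (lt_of_le_of_lt (le_max_right _ _) hm1))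
          exact ⟨p, Set.mem_univ _, by
            rw [hp]; exact ⟨lt_of_le_of_lt (le_max_left _ _) hm1, hm2⟩⟩
      · apply continuousWithinAt_right_of_monotoneOn_of_exists_between
          (hmono.monotoneOn _) Filter.univ_mem
        intro c hc
        obtain ⟨m, hm1, hm2⟩ := exists_between hc
        obtain ⟨p, hp⟩ := hsurj m ((hlb a).trans hm1.le)
        exact ⟨p, Set.mem_univ _, by rw [hp]; exact ⟨hm1, hm2⟩⟩
    · intro w
      obtain ⟨t, ht1, ht0⟩ := key 1 w unitInterval.le_one'
      exact ⟨t, ht1, ht0⟩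
  · rintro ⟨hcont, hD⟩ R
    have key := exists_p_of_cont S T hcont hD
    refine ⟨fun x y => if h : R y x < R x y then
        Classical.choose (key (R x y) (min (R x y) (R y x)) (min_le_left _ _)) else 0,
      fun x y => min (R x y) (R y x), ?_, ?_, ?_, ?_⟩
    · intro x y hpos
      dsimp only at hpos ⊢
      by_cases h : R y x < R x y
      · exact dif_neg (lt_asymm h)
      · rw [dif_neg h] at hpos
        exact absurd hpos (lt_irrefl 0)
    · intro x y; exact min_comm _ _
    · intro x y
      dsimp only
      by_cases h : R y x < R x y
      · rw [dif_pos h]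
        exact (Classical.choose_spec
          (key (R x y) (min (R x y) (R y x)) (min_le_left _ _))).1.symm
      · rw [dif_neg h, S_zero', min_eq_left (le_of_not_gt h)]
    · intro x y
      dsimp only
      by_cases h : R y x < R x y
      · rw [dif_pos h]
        exact (Classical.choose_spec
          (key (R x y) (min (R x y) (R y x)) (min_le_left _ _))).2
      · rw [dif_neg h, T_zero']
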